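/- arXiv:1307.7407 — 3 statements merged into one kernel-verified Lean document; each statement's English description precedes it below -/
import Mathlib

section
/- Lebesgue measure m on [0,1] is invariant under f: for every x ∈ [0,1], m(f^{−1}([0,x])) = x; equivalently, m(f^{−1}(A)) = m(A) for every Borel set A ⊆ [0,1]. -/
open MeasureTheory Set Filter Topology
open scoped Classical ENNReal

structure GBTSetup where
  α : ℝ
  α' : ℝ
  c₀ : ℝ
  c₁ : ℝ
  g₀ : ℝ → ℝ
  g₁ : ℝ → ℝ
  φ : ℝ → ℝ
  a : ℝ
  f : ℝ → ℝ
  hα : 0 < α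
  hα'_pos : 0 < α'
  hα'_le : α' ≤ α
  hc₀ : 0 < c₀
  hc₁ : 0 < c₁
  hφ_cont : ContinuousOn φ (Icc 0 1)
  hφ_anti : AntitoneOn φ (Icc 0 1)
  hφ_mem : ∀ t ∈ Icc (0:ℝ) 1, φ t ∈ Icc (0:ℝ) 1
  hg₀_diff : ContDiffOn ℝ 1 g₀ (Ioo 0 1)
  hg₀_o : (fun t => deriv g₀ t) =o[nhdsWithin 0 (Ioi 0)] fun t : ℝ => t ^ (α - 1)
  hφ_near0 : ∀ᶠ t in nhdsWithin (0:ℝ) (Ioi 0), φ t = 1 - c₀ * t ^ α + g₀ t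
  hφ_one : φ 1 = 0
  hg₁_diff : ContDiffOn ℝ 1 g₁ (Ioo 0 1)
  hg₁_o : (fun t => deriv g₁ t) =o[nhdsWithin 0 (Ioi 0)] fun t : ℝ => t ^ (α' - 1)
  hφ_near1 : ∀ᶠ t in nhdsWithin (1:ℝ) (Iio 1), φ t = c₁ * (1 - t) ^ α' + g₁ (1 - t)
  ha_def : a = ∫ t in (0:ℝ)..1, φ t
  ha_mem : a ∈ Ioo (0:ℝ) 1
  hf_left : ∀ x ∈ Icc 0 a, x = ∫ t in (0:ℝ)..(f x), φ t
  hf_right : ∀ x ∈ Ioc a 1, 1 - x = ∫ t in (f x)..1, (1 - φ t)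
  hf_mono_left : StrictMonoOn f (Icc 0 a)
  hf_mono_right : StrictMonoOn f (Ioc a 1)
  hf_onto_left : f '' Icc 0 a = Icc 0 1
  hf_onto_right : f '' Ioc a 1 = Ioc 0 1

noncomputable def distTrunc (S : Set ℝ) (δ : ℝ) (x : ℝ) : ℝ :=
  if Metric.infDist x S ≤ δ then Metric.infDist x S else 1

def IsHypTime (f : ℝ → ℝ) (S : Set ℝ) (b σ δ : ℝ) (x : ℝ) (n : ℕ) : Prop :=
  1 ≤ n ∧ ∀ l : ℕ, 1 ≤ l → l ≤ n →
    (∏ j ∈ Finset.Ico (n - l) n, |deriv f (f^[j] x)|⁻¹) ≤ σ ^ l ∧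
    σ ^ (b * (l : ℝ)) ≤ distTrunc S δ (f^[n - l] x)

noncomputable def firstHypTime (f : ℝ → ℝ) (S : Set ℝ) (b σ δ : ℝ) (x : ℝ) : ℕ∞ :=
  sInf ((fun n : ℕ => (n : ℕ∞)) '' {n : ℕ | IsHypTime f S b σ δ x n})

noncomputable def HFun (f : ℝ → ℝ) (NN : ℝ → ℝ) (z : ℝ) : ℕ∞ :=
  sInf ((fun n : ℕ => (n : ℕ∞)) '' {n : ℕ | (∑ k ∈ Finset.range (n+1), NN (f^[k] z)) < 0})

noncomputable def Nfun (x₁ x₀ y₀ y₁ xk yk : ℝ) (z : ℝ) : ℝ :=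
  if z ∈ Set.Ioo x₁ x₀ ∪ Set.Ioo y₀ y₁ then -1
  else if z ∈ Set.Ico (0:ℝ) xk ∪ Set.Ioc yk 1 then 1 else 0



lemma measure_image_eq_lintegral_abs_deriv'' {s : Set ℝ} {F F' : ℝ → ℝ}
    (hs : MeasurableSet s) (hF : ∀ x ∈ s, HasDerivWithinAt F (F' x) s x)
    (hinj : Set.InjOn F s) :
    volume (F '' s) = ∫⁻ x in s, ENNReal.ofReal |F' x| := by
  have h := MeasureTheory.lintegral_image_eq_lintegral_abs_det_fderiv_mul volume hs
      (fun x hx => (hF x hx).hasFDerivWithinAt) hinj (fun _ => 1)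
  simpa [ContinuousLinearMap.det_toSpanSingleton] using h

theorem stmt1 (S : GBTSetup) :
    (∀ x ∈ Icc (0:ℝ) 1,
      volume (Icc (0:ℝ) 1 ∩ S.f ⁻¹' (Icc 0 x)) = ENNReal.ofReal x) ∧
    ∀ A : Set ℝ, A ⊆ Icc (0:ℝ) 1 → MeasurableSet A →
      volume (Icc (0:ℝ) 1 ∩ S.f ⁻¹' A) = volume A := by
  set φc := fun t => S.φ (max 0 (min 1 t)) with hφcdef
  have hproj : ∀ t : ℝ, max 0 (min 1 t) ∈ Icc (0:ℝ) 1 :=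
    fun t => ⟨le_max_left _ _, max_le zero_le_one (min_le_left _ _)⟩
  have hφc_eq : ∀ t ∈ Icc (0:ℝ) 1, φc t = S.φ t := by
    intro t ht
    simp only [hφcdef]
    rw [min_eq_right ht.2, max_eq_right ht.1]
  have hφc_cont : Continuous φc :=
    S.hφ_cont.comp_continuous (continuous_const.max (continuous_const.min continuous_id)) hproj
  have hφc_mem : ∀ t, φc t ∈ Icc (0:ℝ) 1 := fun t => S.hφ_mem _ (hproj t)
  have hint1 : Continuous fun t : ℝ => 1 - φc t := continuous_const.sub hφc_cont
  set Φ := fun x => ∫ t in (0:ℝ)..x, φc t with hΦdef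
  set c := 1 - ∫ t in (0:ℝ)..1, (1 - φc t) with hcdef
  set Ψ := fun x => c + ∫ t in (0:ℝ)..x, (1 - φc t) with hΨdef
  have hΦd : ∀ x, HasDerivAt Φ (φc x) x := fun x => (hφc_cont.integral_hasStrictDerivAt 0 x).hasDerivAt
  have hΨd : ∀ x, HasDerivAt Ψ (1 - φc x) x :=
    fun x => ((hint1.integral_hasStrictDerivAt 0 x).hasDerivAt).const_add c
  have hΨval : ∀ x, 1 - Ψ x = ∫ t in x..1, (1 - φc t) := by
    intro x
    have h := intervalIntegral.integral_add_adjacent_intervals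
      (hint1.intervalIntegrable (μ := volume) 0 x) (hint1.intervalIntegrable (μ := volume) x 1)
    simp only [hΨdef, hcdef]
    linarith
  have hΦeq : ∀ x ∈ Icc (0:ℝ) 1, Φ x = ∫ t in (0:ℝ)..x, S.φ t := by
    intro x hx
    apply intervalIntegral.integral_congr
    intro t ht
    rw [uIcc_of_le hx.1] at ht
    exact hφc_eq t ⟨ht.1, ht.2.trans hx.2⟩
  have hΨeq : ∀ x ∈ Icc (0:ℝ) 1, (∫ t in x..1, (1 - S.φ t)) = ∫ t in x..1, (1 - φc t) := by
    intro x hx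
    apply intervalIntegral.integral_congr
    intro t ht
    rw [uIcc_of_le hx.2] at ht
    show 1 - S.φ t = 1 - φc t
    rw [hφc_eq t ⟨hx.1.trans ht.1, ht.2⟩]
  have hfΦ : ∀ x ∈ Icc (0:ℝ) 1, Φ x ∈ Icc 0 S.a ∧ S.f (Φ x) = x := by
    intro x hx
    obtain ⟨y, hy, hfy⟩ : x ∈ S.f '' Icc 0 S.a := S.hf_onto_left ▸ hx
    have hyΦ : y = Φ x := by
      rw [hΦeq x hx, ← hfy]
      exact S.hf_left y hy
    rw [← hyΦ]
    exact ⟨hy, hfy⟩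
  have hfΨ : ∀ x ∈ Ioc (0:ℝ) 1, Ψ x ∈ Ioc S.a 1 ∧ S.f (Ψ x) = x := by
    intro x hx
    obtain ⟨y, hy, hfy⟩ : x ∈ S.f '' Ioc S.a 1 := S.hf_onto_right ▸ hx
    have hx' : x ∈ Icc (0:ℝ) 1 := ⟨hx.1.le, hx.2⟩
    have h1 : 1 - y = ∫ t in x..1, (1 - φc t) := by
      rw [← hΨeq x hx', ← hfy]
      exact S.hf_right y hy
    have hyΨ : y = Ψ x := by
      have := hΨval x; linarith
    rw [← hyΨ]
    exact ⟨hy, hfy⟩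
  have hΦinj : InjOn Φ (Icc 0 1) := fun u hu v hv h => by
    rw [← (hfΦ u hu).2, ← (hfΦ v hv).2, h]
  have hΨinj : InjOn Ψ (Ioc 0 1) := fun u hu v hv h => by
    rw [← (hfΨ u hu).2, ← (hfΨ v hv).2, h]
  have key : ∀ A : Set ℝ, A ⊆ Icc (0:ℝ) 1 → MeasurableSet A →
      volume (Icc (0:ℝ) 1 ∩ S.f ⁻¹' A) = volume A := by
    intro A hA hAm
    have setL : Icc 0 S.a ∩ S.f ⁻¹' A = Φ '' A := by
      ext y
      constructor
      · rintro ⟨hy, hfy⟩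
        exact ⟨S.f y, hfy, by rw [hΦeq _ (hA hfy)]; exact (S.hf_left y hy).symm⟩
      · rintro ⟨x, hx, rfl⟩
        obtain ⟨h1, h2⟩ := hfΦ x (hA hx)
        exact ⟨h1, by rw [mem_preimage, h2]; exact hx⟩
    have setR : Ioc S.a 1 ∩ S.f ⁻¹' A = Ψ '' (A ∩ Ioc 0 1) := by
      ext y
      constructor
      · rintro ⟨hy, hfy⟩
        have hfy01 : S.f y ∈ Ioc (0:ℝ) 1 := S.hf_onto_right ▸ mem_image_of_mem S.f hy
        refine ⟨S.f y, ⟨hfy, hfy01⟩, ?_⟩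
        have h1 : 1 - y = ∫ t in (S.f y)..1, (1 - φc t) := by
          rw [← hΨeq _ ⟨hfy01.1.le, hfy01.2⟩]
          exact S.hf_right y hy
        have := hΨval (S.f y)
        linarith
      · rintro ⟨x, ⟨hxA, hx01⟩, rfl⟩
        obtain ⟨h1, h2⟩ := hfΨ x hx01
        exact ⟨h1, by rw [mem_preimage, h2]; exact hxA⟩
    have hsplit : Icc (0:ℝ) 1 ∩ S.f ⁻¹' A = (Icc 0 S.a ∩ S.f ⁻¹' A) ∪ (Ioc S.a 1 ∩ S.f ⁻¹' A) := by
      rw [← union_inter_distrib_right, Icc_union_Ioc_eq_Icc S.ha_mem.1.le S.ha_mem.2.le]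
    have hA01m : MeasurableSet (A ∩ Ioc 0 1) := hAm.inter measurableSet_Ioc
    have hdisj : Disjoint (Icc 0 S.a ∩ S.f ⁻¹' A) (Ioc S.a 1 ∩ S.f ⁻¹' A) := by
      refine Disjoint.mono inter_subset_left inter_subset_left ?_
      rw [Set.disjoint_left]
      rintro z ⟨_, hz2⟩ ⟨hz3, _⟩
      exact absurd hz2 (not_le.2 hz3)
    have hΨcont : Continuous Ψ := continuous_iff_continuousAt.2 fun x => (hΨd x).continuousAt
    have hRm : MeasurableSet (Ψ '' (A ∩ Ioc 0 1)) :=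
      hA01m.image_of_continuousOn_injOn hΨcont.continuousOn (hΨinj.mono inter_subset_right)
    have volL : volume (Φ '' A) = ∫⁻ x in A, ENNReal.ofReal (φc x) := by
      rw [measure_image_eq_lintegral_abs_deriv'' hAm
        (fun x _ => (hΦd x).hasDerivWithinAt) (hΦinj.mono hA)]
      exact lintegral_congr fun x => by rw [abs_of_nonneg (hφc_mem x).1]
    have volR : volume (Ψ '' (A ∩ Ioc 0 1)) = ∫⁻ x in A ∩ Ioc 0 1, ENNReal.ofReal (1 - φc x) := by
      rw [measure_image_eq_lintegral_abs_deriv'' hA01m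
        (fun x _ => (hΨd x).hasDerivWithinAt) (hΨinj.mono inter_subset_right)]
      exact lintegral_congr fun x => by rw [abs_of_nonneg (by linarith [(hφc_mem x).2] : (0:ℝ) ≤ 1 - φc x)]
    have hae : (A ∩ Ioc 0 1 : Set ℝ) =ᵐ[volume] A := by
      have heq : A ∩ Ioc 0 1 = A \ {0} := by
        ext z
        simp only [mem_inter_iff, mem_Ioc, mem_diff, mem_singleton_iff]
        constructor
        · rintro ⟨hz, h0, _⟩
          exact ⟨hz, ne_of_gt h0⟩
        · rintro ⟨hz, h0⟩
          exact ⟨hz, lt_of_le_of_ne (hA hz).1 (Ne.symm h0), (hA hz).2⟩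
      rw [heq]
      exact diff_ae_eq_self.2 (measure_mono_null inter_subset_right Real.volume_singleton)
    rw [hsplit, measure_union hdisj (setR ▸ hRm), setL, setR, volL, volR,
      setLIntegral_congr hae, ← lintegral_add_left (hφc_cont.measurable.ennreal_ofReal)]
    have hone : ∀ x, ENNReal.ofReal (φc x) + ENNReal.ofReal (1 - φc x) = 1 := fun x => by
      rw [← ENNReal.ofReal_add (hφc_mem x).1 (by linarith [(hφc_mem x).2])]
      norm_num
    calc ∫⁻ x in A, (ENNReal.ofReal (φc x) + ENNReal.ofReal (1 - φc x))
        = ∫⁻ _ in A, 1 := lintegral_congr fun x => hone x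
      _ = volume A := setLIntegral_one A
  refine ⟨fun x hx => ?_, key⟩
  rw [key (Icc 0 x) (Icc_subset_Icc le_rfl hx.2) measurableSet_Icc, Real.volume_Icc, sub_zero]
end

section
/- f admits a period-2 orbit straddling a: there exist points x₀, y₀ with 0 < x₀ < a < y₀ < 1 such that f(x₀) = y₀ and f(y₀) = x₀. -/
open MeasureTheory Set Filter Topology
open scoped Classical ENNReal

theorem stmt4 (S : GBTSetup) :
    ∃ x₀ y₀ : ℝ, 0 < x₀ ∧ x₀ < S.a ∧ S.a < y₀ ∧ y₀ < 1 ∧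
      S.f x₀ = y₀ ∧ S.f y₀ = x₀ := by
  obtain ⟨ha0, ha1⟩ := S.ha_mem
  set Φ : ℝ → ℝ := fun y => ∫ t in (0:ℝ)..y, S.φ t with hΦdef
  set Ψ : ℝ → ℝ := fun u => ∫ t in u..(1:ℝ), (1 - S.φ t) with hΨdef
  -- left inverse property
  have hA : ∀ y ∈ Icc (0:ℝ) 1, Φ y ∈ Icc 0 S.a ∧ S.f (Φ y) = y := by
    intro y hy
    have : y ∈ S.f '' Icc 0 S.a := S.hf_onto_left ▸ hy
    obtain ⟨x, hx, hfx⟩ := this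
    have hx' := S.hf_left x hx
    rw [hfx] at hx'
    have : Φ y = x := hx'.symm
    rw [this]
    exact ⟨hx, hfx⟩
  -- right inverse property
  have hB : ∀ v ∈ Ioc (0:ℝ) 1, (1 - Ψ v) ∈ Ioc S.a 1 ∧ S.f (1 - Ψ v) = v := by
    intro v hv
    have : v ∈ S.f '' Ioc S.a 1 := S.hf_onto_right ▸ hv
    obtain ⟨y, hy, hfy⟩ := this
    have hy' := S.hf_right y hy
    rw [hfy] at hy'
    have : 1 - Ψ v = y := by simp only [hΨdef]; linarith [hy']
    rw [this]
    exact ⟨hy, hfy⟩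
  have hf0 : S.f 0 = 0 := by
    have := (hA 0 (by constructor <;> norm_num)).2
    simpa [hΦdef] using this
  have hΦ1 : Φ 1 = S.a := S.ha_def.symm
  have hfa : S.f S.a = 1 := by
    have := (hA 1 (by constructor <;> norm_num)).2
    rwa [hΦ1] at this
  -- integrability
  have hφint : IntegrableOn S.φ (uIcc (0:ℝ) 1) volume := by
    rw [uIcc_of_le (by norm_num : (0:ℝ) ≤ 1)]
    exact S.hφ_cont.integrableOn_Icc
  have hψint : IntegrableOn (fun t => 1 - S.φ t) (uIcc (0:ℝ) 1) volume := by
    rw [uIcc_of_le (by norm_num : (0:ℝ) ≤ 1)]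
    exact (continuousOn_const.sub S.hφ_cont).integrableOn_Icc
  -- G
  set G : ℝ → ℝ := fun y => (1 - Ψ (Φ y)) - y with hGdef
  have hGa : 0 < G S.a := by
    have haIcc : S.a ∈ Icc (0:ℝ) 1 := ⟨ha0.le, ha1.le⟩
    obtain ⟨hmem, hfeq⟩ := hA S.a haIcc
    have hne : Φ S.a ≠ 0 := by
      intro h
      rw [h, hf0] at hfeq
      exact absurd hfeq.symm (ne_of_gt ha0)
    have hpos : 0 < Φ S.a := lt_of_le_of_ne hmem.1 (Ne.symm hne)
    have := (hB (Φ S.a) ⟨hpos, le_trans hmem.2 ha1.le⟩).1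
    simp only [hGdef]
    linarith [this.1]
  have hG1 : G 1 < 0 := by
    have h1 : S.f 1 = 1 := by
      have := hB 1 ⟨by norm_num, le_refl 1⟩
      have hΨ1 : Ψ 1 = 0 := by simp [hΨdef]
      rw [hΨ1] at this
      simpa using this.2
    have := hB S.a ⟨ha0, ha1.le⟩
    have hlt : 1 - Ψ S.a < 1 := by
      rcases lt_or_eq_of_le this.1.2 with h | h
      · exact h
      · exfalso
        have := this.2
        rw [h, h1] at this
        exact absurd this (ne_of_gt ha1)
    simp only [hGdef, hΦ1]
    linarith
  -- continuity of G on [a,1]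
  have hΦcont : ContinuousOn Φ (Icc S.a 1) := by
    have : ContinuousOn Φ (uIcc (0:ℝ) 1) :=
      intervalIntegral.continuousOn_primitive_interval hφint
    exact this.mono (by rw [uIcc_of_le (by norm_num : (0:ℝ) ≤ 1)]; exact Icc_subset_Icc ha0.le le_rfl)
  have hΨcont : ContinuousOn Ψ (Icc (0:ℝ) 1) := by
    have : ContinuousOn (fun u => ∫ t in u..(1:ℝ), (1 - S.φ t)) (uIcc (0:ℝ) 1) :=
      intervalIntegral.continuousOn_primitive_interval_left hψint
    rwa [uIcc_of_le (by norm_num : (0:ℝ) ≤ 1)] at this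
  have hΦmaps : MapsTo Φ (Icc S.a 1) (Icc (0:ℝ) 1) := by
    intro y hy
    have := (hA y ⟨le_trans ha0.le hy.1, hy.2⟩).1
    exact ⟨this.1, le_trans this.2 ha1.le⟩
  have hGcont : ContinuousOn G (Icc S.a 1) :=
    (continuousOn_const.sub (hΨcont.comp hΦcont hΦmaps)).sub continuousOn_id
  -- IVT
  have hIVT := intermediate_value_Ioo' ha1.le hGcont
  have h0 : (0:ℝ) ∈ Ioo (G 1) (G S.a) := ⟨hG1, hGa⟩
  obtain ⟨y₀, hy₀, hGy₀⟩ := hIVT h0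
  -- conclude
  obtain ⟨hx₀mem, hfx₀⟩ := hA y₀ ⟨le_trans ha0.le hy₀.1.le, hy₀.2.le⟩
  set x₀ := Φ y₀ with hx₀def
  have hx₀pos : 0 < x₀ := by
    rcases lt_or_eq_of_le hx₀mem.1 with h | h
    · exact h
    · exfalso
      rw [← h, hf0] at hfx₀
      exact absurd hfx₀.symm (ne_of_gt (lt_trans ha0 hy₀.1))
  have hx₀lt : x₀ < S.a := by
    rcases lt_or_eq_of_le hx₀mem.2 with h | h
    · exact h
    · exfalso
      rw [h, hfa] at hfx₀
      exact absurd hfx₀ (ne_of_gt hy₀.2)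
  have hy₀eq : 1 - Ψ x₀ = y₀ := by
    simp only [hGdef] at hGy₀
    linarith
  have hfy₀ : S.f y₀ = x₀ := by
    have := (hB x₀ ⟨hx₀pos, le_trans hx₀lt.le ha1.le⟩).2
    rwa [hy₀eq] at this
  exact ⟨x₀, y₀, hx₀pos, hx₀lt, hy₀.1, hy₀.2, hfx₀, hfy₀⟩
end

section
/- Fix σ ∈ (0,1) and δ > 0. Let k₁ be the minimal integer such that σ·sup_{x ∈ [0,x_{k₁}] ∪ [y_{k₁},1]} f′(x) < 1 (k₁ is well defined since f′ is increasing on (0,a), decreasing on (a,1), and f′(x_k) → 1 and f′(y_k) → 1 as k → ∞). Then for every k ≥ k₁ and every x ∈ J_k ∪ J′_k, the first (σ,δ)-hyperbolic time satisfies h_{σ,δ}(x) > k − k₁. -/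
open MeasureTheory Set Filter Topology
open scoped Classical ENNReal

theorem stmt12 (S : GBTSetup)
    (x x' y y' : ℕ → ℝ)
    (hx0 : 0 < x 0) (hx0a : x 0 < S.a) (hay0 : S.a < y 0) (hy01 : y 0 < 1)
    (hper1 : S.f (x 0) = y 0) (hper2 : S.f (y 0) = x 0)
    (hx : ∀ n : ℕ, x (n+1) ∈ Ioo 0 S.a ∧ S.f (x (n+1)) = x n)
    (hx' : ∀ n : ℕ, x' (n+1) ∈ Ioo S.a 1 ∧ S.f (x' (n+1)) = x n)
    (hy : ∀ n : ℕ, y (n+1) ∈ Ioo S.a 1 ∧ S.f (y (n+1)) = y n)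
    (hy' : ∀ n : ℕ, y' (n+1) ∈ Ioo 0 S.a ∧ S.f (y' (n+1)) = y n)
    (b σ δ : ℝ) (hb : b ∈ Ioo (0:ℝ) (1/4)) (hσ : σ ∈ Ioo (0:ℝ) 1) (hδ : 0 < δ)
    (k₁ : ℕ)
    (hk₁ : ∀ z ∈ Icc (0:ℝ) (x k₁) ∪ Icc (y k₁) 1, σ * deriv S.f z < 1) :
    ∀ k : ℕ, k₁ ≤ k → ∀ z ∈ Ioo (x (k+1)) (x k) ∪ Ioo (y k) (y (k+1)),
      ((k - k₁ : ℕ) : ℕ∞) < firstHypTime S.f {0, S.a, 1} b σ δ z := by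
  obtain ⟨hσ0, hσ1⟩ := hσ
  obtain ⟨ha0, ha1⟩ := S.ha_mem
  have hxm : ∀ m, x m ∈ Ioo 0 S.a := by
    intro m
    cases m with
    | zero => exact ⟨hx0, hx0a⟩
    | succ n => exact (hx n).1
  have hym : ∀ m, y m ∈ Ioo S.a 1 := by
    intro m
    cases m with
    | zero => exact ⟨hay0, hy01⟩
    | succ n => exact (hy n).1
  -- integrability of φ and 1 - φ on subintervals of [0,1]
  have hφint : ∀ u v : ℝ, u ∈ Icc (0:ℝ) 1 → v ∈ Icc (0:ℝ) 1 →
      IntervalIntegrable S.φ MeasureTheory.volume u v := by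
    intro u v hu hv
    exact (S.hφ_cont.mono (Set.uIcc_subset_Icc hu hv)).intervalIntegrable
  have hψint : ∀ u v : ℝ, u ∈ Icc (0:ℝ) 1 → v ∈ Icc (0:ℝ) 1 →
      IntervalIntegrable (fun t => 1 - S.φ t) MeasureTheory.volume u v := by
    intro u v hu hv
    exact ((continuousOn_const.sub S.hφ_cont).mono
      (Set.uIcc_subset_Icc hu hv)).intervalIntegrable
  have h01 : (0:ℝ) ∈ Icc (0:ℝ) 1 := ⟨le_rfl, zero_le_one⟩
  have h11 : (1:ℝ) ∈ Icc (0:ℝ) 1 := ⟨zero_le_one, le_rfl⟩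
  -- f maps [0,a] into [0,1] and (a,1] into (0,1]
  have hfL : ∀ t ∈ Icc (0:ℝ) S.a, S.f t ∈ Icc (0:ℝ) 1 := by
    intro t ht
    rw [← S.hf_onto_left]
    exact mem_image_of_mem _ ht
  have hfR : ∀ t ∈ Ioc S.a 1, S.f t ∈ Ioc (0:ℝ) 1 := by
    intro t ht
    rw [← S.hf_onto_right]
    exact mem_image_of_mem _ ht
  -- f t ≥ t on [0,a]
  have hfge : ∀ t ∈ Icc (0:ℝ) S.a, t ≤ S.f t := by
    intro t ht
    have hft := hfL t ht
    calc t = ∫ s in (0:ℝ)..(S.f t), S.φ s := S.hf_left t ht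
      _ ≤ ∫ s in (0:ℝ)..(S.f t), (1:ℝ) := by
          apply intervalIntegral.integral_mono_on hft.1
            (hφint 0 (S.f t) h01 hft) intervalIntegrable_const
          intro s hs
          exact (S.hφ_mem s ⟨hs.1, hs.2.trans hft.2⟩).2
      _ = S.f t := by simp
  -- f t ≤ t on (a,1]
  have hfle : ∀ t ∈ Ioc S.a 1, S.f t ≤ t := by
    intro t ht
    have hft := hfR t ht
    have key : 1 - t ≤ 1 - S.f t := by
      calc 1 - t = ∫ s in (S.f t)..1, (1 - S.φ s) := S.hf_right t ht
        _ ≤ ∫ s in (S.f t)..1, (1:ℝ) := by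
            apply intervalIntegral.integral_mono_on hft.2
              (hψint (S.f t) 1 ⟨hft.1.le, hft.2⟩ h11) intervalIntegrable_const
            intro s hs
            have h0 : 0 ≤ S.φ s := (S.hφ_mem s ⟨hft.1.le.trans hs.1, hs.2⟩).1
            linarith
        _ = 1 - S.f t := by simp
    linarith
  -- monotonicity of the sequences x and y
  have hx_anti : ∀ m n : ℕ, m ≤ n → x n ≤ x m := by
    have step : ∀ m, x (m+1) ≤ x m := by
      intro m
      have h := hfge (x (m+1)) ⟨(hxm (m+1)).1.le, (hxm (m+1)).2.le⟩
      rwa [(hx m).2] at h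
    intro m n h
    exact antitone_nat_of_succ_le step h
  have hy_mono : ∀ m n : ℕ, m ≤ n → y m ≤ y n := by
    have step : ∀ m, y m ≤ y (m+1) := by
      intro m
      have h := hfle (y (m+1)) ⟨(hym (m+1)).1, (hym (m+1)).2.le⟩
      rwa [(hy m).2] at h
    intro m n h
    exact monotone_nat_of_le_succ step h
  -- positivity of φ on (0,a)
  have hφpos : ∀ u ∈ Ioo (0:ℝ) S.a, 0 < S.φ u := by
    intro u hu
    by_contra hcon
    push_neg at hcon
    have hu1 : u ∈ Icc (0:ℝ) 1 := ⟨hu.1.le, (hu.2.trans ha1).le⟩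
    have hsplit : S.a = (∫ t in (0:ℝ)..u, S.φ t) + ∫ t in u..(1:ℝ), S.φ t := by
      rw [S.ha_def,
        intervalIntegral.integral_add_adjacent_intervals (hφint 0 u h01 hu1)
          (hφint u 1 hu1 h11)]
    have h1 : (∫ t in (0:ℝ)..u, S.φ t) ≤ u := by
      calc (∫ t in (0:ℝ)..u, S.φ t) ≤ ∫ t in (0:ℝ)..u, (1:ℝ) := by
            apply intervalIntegral.integral_mono_on hu.1.le (hφint 0 u h01 hu1)
              intervalIntegrable_const
            intro s hs
            exact (S.hφ_mem s ⟨hs.1, hs.2.trans hu1.2⟩).2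
        _ = u := by simp
    have h2 : (∫ t in u..(1:ℝ), S.φ t) ≤ 0 := by
      calc (∫ t in u..(1:ℝ), S.φ t) ≤ ∫ t in u..(1:ℝ), (0:ℝ) := by
            apply intervalIntegral.integral_mono_on hu1.2 (hφint u 1 hu1 h11)
              intervalIntegrable_const
            intro s hs
            exact le_trans (S.hφ_anti hu1 ⟨hu1.1.trans hs.1, hs.2⟩ hs.1) hcon
        _ = 0 := by simp
    have hle : S.a ≤ u := by rw [hsplit]; linarith
    exact absurd hu.2 (not_lt.2 hle)
  -- φ < 1 on (a,1)
  have hφlt1 : ∀ u ∈ Ioo S.a 1, S.φ u < 1 := by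
    intro u hu
    by_contra hcon
    push_neg at hcon
    have hu1 : u ∈ Icc (0:ℝ) 1 := ⟨(ha0.trans hu.1).le, hu.2.le⟩
    have hsplit : S.a = (∫ t in (0:ℝ)..u, S.φ t) + ∫ t in u..(1:ℝ), S.φ t := by
      rw [S.ha_def,
        intervalIntegral.integral_add_adjacent_intervals (hφint 0 u h01 hu1)
          (hφint u 1 hu1 h11)]
    have h1 : u ≤ (∫ t in (0:ℝ)..u, S.φ t) := by
      calc u = ∫ t in (0:ℝ)..u, (1:ℝ) := by simp
        _ ≤ ∫ t in (0:ℝ)..u, S.φ t := by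
            apply intervalIntegral.integral_mono_on hu1.1 intervalIntegrable_const
              (hφint 0 u h01 hu1)
            intro s hs
            exact le_trans hcon (S.hφ_anti ⟨hs.1, hs.2.trans hu1.2⟩ hu1 hs.2)
    have h2 : (0:ℝ) ≤ ∫ t in u..(1:ℝ), S.φ t := by
      apply intervalIntegral.integral_nonneg hu1.2
      intro s hs
      exact (S.hφ_mem s ⟨hu1.1.trans hs.1, hs.2⟩).1
    have hle : u ≤ S.a := by rw [hsplit]; linarith
    exact absurd hu.1 (not_lt.2 hle)
  -- f maps (x (m+2), x (m+1)) into (x (m+1), x m)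
  have mapL : ∀ m : ℕ, ∀ w ∈ Ioo (x (m+2)) (x (m+1)), S.f w ∈ Ioo (x (m+1)) (x m) := by
    intro m w hw
    have hwIcc : w ∈ Icc (0:ℝ) S.a :=
      ⟨((hxm (m+2)).1.trans hw.1).le, (hw.2.trans (hxm (m+1)).2).le⟩
    have hmem2 : x (m+2) ∈ Icc (0:ℝ) S.a := ⟨(hxm _).1.le, (hxm _).2.le⟩
    have hmem1 : x (m+1) ∈ Icc (0:ℝ) S.a := ⟨(hxm _).1.le, (hxm _).2.le⟩
    constructor
    · have h := S.hf_mono_left hmem2 hwIcc hw.1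
      rwa [(hx (m+1)).2] at h
    · have h := S.hf_mono_left hwIcc hmem1 hw.2
      rwa [(hx m).2] at h
  have mapR : ∀ m : ℕ, ∀ w ∈ Ioo (y (m+1)) (y (m+2)), S.f w ∈ Ioo (y m) (y (m+1)) := by
    intro m w hw
    have hwIoc : w ∈ Ioc S.a 1 :=
      ⟨(hym (m+1)).1.trans hw.1, (hw.2.trans (hym (m+2)).2).le⟩
    have hmem2 : y (m+2) ∈ Ioc S.a 1 := ⟨(hym _).1, (hym _).2.le⟩
    have hmem1 : y (m+1) ∈ Ioc S.a 1 := ⟨(hym _).1, (hym _).2.le⟩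
    constructor
    · have h := S.hf_mono_right hmem1 hwIoc hw.1
      rwa [(hy m).2] at h
    · have h := S.hf_mono_right hwIoc hmem2 hw.2
      rwa [(hy (m+1)).2] at h
  -- iterates stay in the corresponding intervals
  have iterL : ∀ k₀ : ℕ, ∀ z ∈ Ioo (x (k₀+1)) (x k₀), ∀ j, j ≤ k₀ →
      S.f^[j] z ∈ Ioo (x (k₀ - j + 1)) (x (k₀ - j)) := by
    intro k₀ z hz j
    induction j with
    | zero => intro _; simpa using hz
    | succ j ih =>
      intro hj
      have hw := ih (by omega)
      obtain ⟨m', hmm⟩ : ∃ m', k₀ - j = m' + 1 := ⟨k₀ - j - 1, by omega⟩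
      rw [hmm] at hw
      have h2 : S.f^[j+1] z ∈ Ioo (x (m'+1)) (x m') := by
        rw [Function.iterate_succ_apply']
        exact mapL m' _ hw
      have e1 : k₀ - (j+1) + 1 = m' + 1 := by omega
      have e2 : k₀ - (j+1) = m' := by omega
      rw [e1, e2]
      exact h2
  have iterR : ∀ k₀ : ℕ, ∀ z ∈ Ioo (y k₀) (y (k₀+1)), ∀ j, j ≤ k₀ →
      S.f^[j] z ∈ Ioo (y (k₀ - j)) (y (k₀ - j + 1)) := by
    intro k₀ z hz j
    induction j with
    | zero => intro _; simpa using hz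
    | succ j ih =>
      intro hj
      have hw := ih (by omega)
      obtain ⟨m', hmm⟩ : ∃ m', k₀ - j = m' + 1 := ⟨k₀ - j - 1, by omega⟩
      rw [hmm] at hw
      have h2 : S.f^[j+1] z ∈ Ioo (y m') (y (m'+1)) := by
        rw [Function.iterate_succ_apply']
        exact mapR m' _ hw
      have e1 : k₀ - (j+1) + 1 = m' + 1 := by omega
      have e2 : k₀ - (j+1) = m' := by omega
      rw [e1, e2]
      exact h2
  -- derivative estimate at points of J_{m+1} with m + 1 ≥ k₁
  have keyL : ∀ m : ℕ, k₁ ≤ m + 1 → ∀ w ∈ Ioo (x (m+2)) (x (m+1)), σ < |deriv S.f w|⁻¹ := by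
    intro m hmk w hw
    have hwa : w ∈ Ioo 0 S.a := ⟨(hxm (m+2)).1.trans hw.1, hw.2.trans (hxm (m+1)).2⟩
    have hfw := mapL m w hw
    have hfwIoo : S.f w ∈ Ioo (0:ℝ) S.a := ⟨(hxm (m+1)).1.trans hfw.1, hfw.2.trans (hxm m).2⟩
    have hφp := hφpos _ hfwIoo
    have hfw01 : S.f w ∈ Ioo (0:ℝ) 1 := ⟨hfwIoo.1, hfwIoo.2.trans ha1⟩
    have hcontφ : ContinuousAt S.φ (S.f w) :=
      S.hφ_cont.continuousAt (Icc_mem_nhds hfw01.1 hfw01.2)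
    have hmeas : StronglyMeasurableAtFilter S.φ (𝓝 (S.f w)) MeasureTheory.volume :=
      ContinuousOn.stronglyMeasurableAtFilter isOpen_Ioo
        (S.hφ_cont.mono Ioo_subset_Icc_self) _ hfw01
    have hF : HasDerivAt (fun u => ∫ t in (0:ℝ)..u, S.φ t) (S.φ (S.f w)) (S.f w) :=
      intervalIntegral.integral_hasDerivAt_right
        (hφint 0 (S.f w) h01 ⟨hfw01.1.le, hfw01.2.le⟩) hmeas hcontφ
    have hcontf : ContinuousAt S.f w := by
      apply S.hf_mono_left.continuousAt_of_image_mem_nhds (Icc_mem_nhds hwa.1 hwa.2)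
      rw [S.hf_onto_left]
      exact Icc_mem_nhds hfw01.1 hfw01.2
    have hev : ∀ᶠ v in 𝓝 w, (∫ t in (0:ℝ)..(S.f v), S.φ t) = v := by
      filter_upwards [Icc_mem_nhds hwa.1 hwa.2] with v hv
      exact (S.hf_left v hv).symm
    have hd : HasDerivAt S.f (S.φ (S.f w))⁻¹ w :=
      HasDerivAt.of_local_left_inverse hcontf hF (ne_of_gt hφp) hev
    have hderiv : deriv S.f w = (S.φ (S.f w))⁻¹ := hd.deriv
    have hk : σ * deriv S.f w < 1 := by
      apply hk₁
      left
      refine ⟨hwa.1.le, ?_⟩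
      calc w ≤ x (m+1) := hw.2.le
        _ ≤ x k₁ := hx_anti k₁ (m+1) hmk
    rw [hderiv] at hk ⊢
    rw [abs_inv, inv_inv, abs_of_pos hφp]
    by_contra hcon
    push_neg at hcon
    have hinv : σ⁻¹ ≤ (S.φ (S.f w))⁻¹ := inv_anti₀ hφp hcon
    have hge : (1:ℝ) ≤ σ * (S.φ (S.f w))⁻¹ := by
      calc (1:ℝ) = σ * σ⁻¹ := (mul_inv_cancel₀ (ne_of_gt hσ0)).symm
        _ ≤ σ * (S.φ (S.f w))⁻¹ := mul_le_mul_of_nonneg_left hinv hσ0.le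
    linarith
  have keyR : ∀ m : ℕ, k₁ ≤ m + 1 → ∀ w ∈ Ioo (y (m+1)) (y (m+2)), σ < |deriv S.f w|⁻¹ := by
    intro m hmk w hw
    have hwa : w ∈ Ioo S.a 1 := ⟨(hym (m+1)).1.trans hw.1, hw.2.trans (hym (m+2)).2⟩
    have hfw := mapR m w hw
    have hfwIoo : S.f w ∈ Ioo S.a 1 := ⟨(hym m).1.trans hfw.1, hfw.2.trans (hym (m+1)).2⟩
    have hφp : 0 < 1 - S.φ (S.f w) := by
      have := hφlt1 _ hfwIoo
      linarith
    have hfw01 : S.f w ∈ Ioo (0:ℝ) 1 := ⟨ha0.trans hfwIoo.1, hfwIoo.2⟩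
    have hcontφ : ContinuousAt (fun t => 1 - S.φ t) (S.f w) :=
      continuousAt_const.sub (S.hφ_cont.continuousAt (Icc_mem_nhds hfw01.1 hfw01.2))
    have hmeas : StronglyMeasurableAtFilter (fun t => 1 - S.φ t) (𝓝 (S.f w))
        MeasureTheory.volume :=
      ContinuousOn.stronglyMeasurableAtFilter isOpen_Ioo
        ((continuousOn_const.sub S.hφ_cont).mono Ioo_subset_Icc_self) _ hfw01
    have hG : HasDerivAt (fun u => ∫ t in u..(1:ℝ), (1 - S.φ t))
        (-(1 - S.φ (S.f w))) (S.f w) :=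
      intervalIntegral.integral_hasDerivAt_left
        (hψint (S.f w) 1 ⟨hfw01.1.le, hfw01.2.le⟩ h11) hmeas hcontφ
    have hF : HasDerivAt (fun u => 1 - ∫ t in u..(1:ℝ), (1 - S.φ t))
        (1 - S.φ (S.f w)) (S.f w) := by
      have := hG.const_sub 1
      simpa using this
    have hcontf : ContinuousAt S.f w := by
      apply S.hf_mono_right.continuousAt_of_image_mem_nhds (Ioc_mem_nhds hwa.1 hwa.2)
      rw [S.hf_onto_right]
      exact Ioc_mem_nhds hfw01.1 hfw01.2
    have hev : ∀ᶠ v in 𝓝 w, (1 - ∫ t in (S.f v)..(1:ℝ), (1 - S.φ t)) = v := by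
      filter_upwards [Ioc_mem_nhds hwa.1 hwa.2] with v hv
      have := S.hf_right v hv
      linarith
    have hd : HasDerivAt S.f (1 - S.φ (S.f w))⁻¹ w :=
      HasDerivAt.of_local_left_inverse hcontf hF (ne_of_gt hφp) hev
    have hderiv : deriv S.f w = (1 - S.φ (S.f w))⁻¹ := hd.deriv
    have hk : σ * deriv S.f w < 1 := by
      apply hk₁
      right
      refine ⟨?_, hwa.2.le⟩
      calc y k₁ ≤ y (m+1) := hy_mono k₁ (m+1) hmk
        _ ≤ w := hw.1.le
    rw [hderiv] at hk ⊢
    rw [abs_inv, inv_inv, abs_of_pos hφp]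
    by_contra hcon
    push_neg at hcon
    have hinv : σ⁻¹ ≤ (1 - S.φ (S.f w))⁻¹ := inv_anti₀ hφp hcon
    have hge : (1:ℝ) ≤ σ * (1 - S.φ (S.f w))⁻¹ := by
      calc (1:ℝ) = σ * σ⁻¹ := (mul_inv_cancel₀ (ne_of_gt hσ0)).symm
        _ ≤ σ * (1 - S.φ (S.f w))⁻¹ := mul_le_mul_of_nonneg_left hinv hσ0.le
    linarith
  -- main argument
  intro k hk z hz
  have main : ∀ n : ℕ, IsHypTime S.f {0, S.a, 1} b σ δ z n → k - k₁ < n := by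
    intro n hn
    by_contra hcon
    push_neg at hcon
    obtain ⟨hn1, hcond⟩ := hn
    obtain ⟨hprod, -⟩ := hcond 1 le_rfl hn1
    have hIco : Finset.Ico (n-1) n = {n-1} := by
      apply Finset.ext
      intro i
      simp only [Finset.mem_Ico, Finset.mem_singleton]
      omega
    rw [hIco, Finset.prod_singleton, pow_one] at hprod
    set j := n - 1 with hj
    have hjk : j ≤ k - 1 := by omega
    obtain ⟨m', hmm⟩ : ∃ m', k - j = m' + 1 := ⟨k - j - 1, by omega⟩
    have hm'k : k₁ ≤ m' + 1 := by omega
    have e1 : k - j + 1 = m' + 2 := by omega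
    have hw : σ < |deriv S.f (S.f^[j] z)|⁻¹ := by
      rcases hz with hzL | hzR
      · have hiter := iterL k z hzL j (by omega)
        rw [e1, hmm] at hiter
        exact keyL m' hm'k _ hiter
      · have hiter := iterR k z hzR j (by omega)
        rw [e1, hmm] at hiter
        exact keyR m' hm'k _ hiter
    exact absurd hprod (not_le.2 hw)
  have hlt : ((k - k₁ : ℕ) : ℕ∞) < ((k - k₁ + 1 : ℕ) : ℕ∞) := by
    exact_mod_cast Nat.lt_succ_self _
  refine hlt.trans_le ?_
  apply le_sInf
  rintro e ⟨n, hn, rfl⟩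
  show ((k - k₁ + 1 : ℕ) : ℕ∞) ≤ (n : ℕ∞)
  exact_mod_cast Nat.succ_le_of_lt (main n hn)
end
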